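/- For each j = 0, 1, …, N−1, the one-column partition function W̃_j, regarded as a function of v_M, satisfies the quasi-periodicities W̃_j(u₁,…,u_N|v_M + 2K₁/λ|a₁₂) = (-1)^N W̃_j(u₁,…,u_N|v_M|a₁₂) and W̃_j(u₁,…,u_N|v_M + 2iK₂/λ|a₁₂) = (-q^{-1})^N exp( -(iπλ/K₁)( N v_M − Σ_{j=1}^N u_j + a₁₂ + N + M − 2 ) ) W̃_j(u₁,…,u_N|v_M|a₁₂); in particular these quasi-periodicity factors are independent of j. -/

import Mathlib

open Complex

noncomputable section

/-- Summability of complex logs of `1 + f n` for summable `f`. -/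
lemma csummable_log {f : ℕ → ℂ} (hf : Summable f) :
    Summable fun n => Complex.log (1 + f n) := by
  apply Summable.of_norm_bounded_eventually (g := fun n => 3/2 * ‖f n‖) (hf.norm.mul_left _)
  have h0 : Filter.Tendsto (fun n => ‖f n‖) Filter.atTop (nhds 0) := by
    simpa using hf.tendsto_atTop_zero.norm
  rw [Nat.cofinite_eq_atTop]
  filter_upwards [h0.eventually_le_const (by norm_num : (0:ℝ) < 1/2)] with n hn
  exact Complex.norm_log_one_add_half_le_self hn

lemma cmultipliable_one_add {f : ℕ → ℂ} (hf : Summable f) :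
    Multipliable fun n => 1 + f n := by
  by_cases h : ∀ n, 1 + f n ≠ 0
  · exact Complex.multipliable_of_summable_log (csummable_log hf)
  · push_neg at h
    obtain ⟨n0, hn0⟩ := h
    refine ⟨0, ?_⟩
    rw [HasProd]
    apply Filter.Tendsto.congr' _ tendsto_const_nhds
    filter_upwards [Filter.eventually_ge_atTop ({n0} : Finset ℕ)] with s hs
    exact (Finset.prod_eq_zero (hs (Finset.mem_singleton_self n0)) hn0).symm


lemma qgeom_summable {q : ℝ} (hq0 : 0 < q) (hq1 : q < 1) (c : ℕ) (w : ℂ) :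
    Summable fun n : ℕ => -((q:ℂ) ^ (2*n+c) * w) := by
  have h : Summable fun n : ℕ => ((q:ℂ)^2) ^ n := by
    apply summable_geometric_of_norm_lt_one
    have : ‖(q:ℂ)‖ < 1 := by
      rw [Complex.norm_real, Real.norm_eq_abs, abs_of_pos hq0]; exact hq1
    calc ‖(q:ℂ)^2‖ = ‖(q:ℂ)‖^2 := norm_pow _ _
    _ < 1 := by nlinarith [norm_nonneg (q:ℂ)]
  have := ((h.mul_left ((q:ℂ)^c)).mul_right w).neg
  apply this.congr
  intro n
  congr 1
  rw [← pow_mul, ← pow_add]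
  ring_nf

lemma mult_aux {q : ℝ} (hq0 : 0 < q) (hq1 : q < 1) (c : ℕ) (w : ℂ) :
    Multipliable fun n : ℕ => 1 - (q:ℂ) ^ (2*n+c) * w := by
  have := cmultipliable_one_add (qgeom_summable hq0 hq1 c w)
  apply this.congr
  intro n
  ring

/-- summable real logs -/
lemma rsummable_log_one_add {f : ℕ → ℝ} (h0 : ∀ n, 0 ≤ f n) (hs : Summable f) :
    Summable fun n => Real.log (1 + f n) := by
  apply hs.of_nonneg_of_le (fun n => Real.log_nonneg (by linarith [h0 n]))
  intro n
  have := Real.log_le_sub_one_of_pos (x := 1 + f n) (by linarith [h0 n])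
  linarith

lemma rsummable_log_one_sub {q : ℝ} (hq1 : q < 1) {f : ℕ → ℝ} (h0 : ∀ n, 0 ≤ f n)
    (hfq : ∀ n, f n ≤ q) (hs : Summable f) :
    Summable fun n => Real.log (1 - f n) := by
  rw [← summable_neg_iff]
  have hf1 : ∀ n, 0 < 1 - f n := fun n => by linarith [hfq n]
  refine Summable.of_nonneg_of_le (f := fun n => (1-q)⁻¹ * f n) ?_ ?_ (hs.mul_left _)
  · intro n
    rw [neg_nonneg]
    exact Real.log_nonpos (by linarith [hf1 n]) (by linarith [h0 n])
  · intro n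
    rw [← Real.log_inv]
    have hfn := hf1 n
    have h1 := Real.log_le_sub_one_of_pos (x := (1 - f n)⁻¹) (by positivity)
    have e : (1 - f n)⁻¹ - 1 = f n * (1 - f n)⁻¹ := by
      field_simp [hfn.ne']
      ring
    have h3 : (1 - f n)⁻¹ ≤ (1-q)⁻¹ := inv_anti₀ (b := 1 - q) (a := 1 - f n) (by linarith) (by linarith [hfq n])
    nlinarith [h0 n]

/-- The half period magnitude `K₁` for elliptic nome `q`. -/
def Kone (q : ℝ) : ℝ :=
  Real.pi / 2 * ∏' n : ℕ,
    ((1 + q ^ (2 * n + 1)) / (1 - q ^ (2 * n + 1)) *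
      ((1 - q ^ (2 * n + 2)) / (1 + q ^ (2 * n + 2)))) ^ 2

/-- The half period magnitude `K₂` for elliptic nome `q`. -/
def Ktwo (q : ℝ) : ℝ := -(Kone q / Real.pi) * Real.log q

lemma q_pow_lt_one {q : ℝ} (hq0 : 0 < q) (hq1 : q < 1) {k : ℕ} (hk : 1 ≤ k) : q ^ k < 1 :=
  pow_lt_one₀ hq0.le hq1 (by omega)

lemma q_pow_le {q : ℝ} (hq0 : 0 < q) (hq1 : q < 1) {k : ℕ} (hk : 1 ≤ k) : q ^ k ≤ q :=
  pow_le_of_le_one hq0.le hq1.le (by omega)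

lemma q_geom_summable_real {q : ℝ} (hq0 : 0 < q) (hq1 : q < 1) (c : ℕ) :
    Summable fun n : ℕ => q ^ (2*n+c) := by
  have h : Summable fun n : ℕ => (q^2) ^ n :=
    summable_geometric_of_lt_one (by positivity) (by nlinarith)
  apply (h.mul_left (q^c)).congr
  intro n
  rw [← pow_mul, ← pow_add]
  ring_nf

lemma Kone_pos {q : ℝ} (hq0 : 0 < q) (hq1 : q < 1) : 0 < Kone q := by
  have ha1 : ∀ n : ℕ, q ^ (2*n+1) < 1 := fun n => q_pow_lt_one hq0 hq1 (by omega)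
  have hb1 : ∀ n : ℕ, q ^ (2*n+2) < 1 := fun n => q_pow_lt_one hq0 hq1 (by omega)
  have hap : ∀ n : ℕ, (0:ℝ) < q ^ (2*n+1) := fun n => by positivity
  have hbp : ∀ n : ℕ, (0:ℝ) < q ^ (2*n+2) := fun n => by positivity
  set c : ℕ → ℝ := fun n =>
    ((1 + q ^ (2 * n + 1)) / (1 - q ^ (2 * n + 1)) *
      ((1 - q ^ (2 * n + 2)) / (1 + q ^ (2 * n + 2)))) ^ 2 with hc
  have hcpos : ∀ n, 0 < c n := by
    intro n
    have h1 := ha1 n; have h2 := hb1 n; have h3 := hap n; have h4 := hbp n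
    rw [hc]
    exact pow_pos (mul_pos (div_pos (by linarith) (by linarith))
      (div_pos (by linarith) (by linarith))) 2
  have hlog : Summable fun n => Real.log (c n) := by
    have S1 : Summable fun n => Real.log (1 + q ^ (2*n+1)) :=
      rsummable_log_one_add (fun n => (hap n).le) (q_geom_summable_real hq0 hq1 1)
    have S2 : Summable fun n => Real.log (1 - q ^ (2*n+1)) :=
      rsummable_log_one_sub hq1 (fun n => (hap n).le)
        (fun n => q_pow_le hq0 hq1 (by omega)) (q_geom_summable_real hq0 hq1 1)
    have S3 : Summable fun n => Real.log (1 - q ^ (2*n+2)) :=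
      rsummable_log_one_sub hq1 (fun n => (hbp n).le)
        (fun n => q_pow_le hq0 hq1 (by omega)) (q_geom_summable_real hq0 hq1 2)
    have S4 : Summable fun n => Real.log (1 + q ^ (2*n+2)) :=
      rsummable_log_one_add (fun n => (hbp n).le) (q_geom_summable_real hq0 hq1 2)
    apply (((S1.sub S2).add (S3.sub S4)).mul_left 2).congr
    intro n
    have h1 := ha1 n; have h2 := hb1 n; have h3 := hap n; have h4 := hbp n
    rw [hc]
    simp only
    have p1 : (0:ℝ) < 1 + q^(2*n+1) := by linarith
    have p2 : (0:ℝ) < 1 - q^(2*n+1) := by linarith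
    have p3 : (0:ℝ) < 1 - q^(2*n+2) := by linarith
    have p4 : (0:ℝ) < 1 + q^(2*n+2) := by linarith
    rw [Real.log_pow]
    rw [Real.log_mul (ne_of_gt (div_pos p1 p2)) (ne_of_gt (div_pos p3 p4)),
      Real.log_div p1.ne' p2.ne', Real.log_div p3.ne' p4.ne']
    push_cast
    ring
  have hprod : HasProd c (Real.exp (∑' n, Real.log (c n))) := by
    have heq : (fun n => Real.exp (Real.log (c n))) = c :=
      funext fun n => Real.exp_log (hcpos n)
    have h2 := hlog.hasSum.rexp
    rw [Function.comp_def, heq] at h2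
    exact h2
  have htp : 0 < ∏' n, c n := by
    rw [hprod.tprod_eq]
    exact Real.exp_pos _
  have : Kone q = Real.pi / 2 * ∏' n, c n := rfl
  rw [this]
  have := Real.pi_pos
  positivity

/-- The elliptic theta function `H`. -/
def theta (q : ℝ) (u : ℂ) : ℂ :=
  2 * (q : ℂ) ^ (1 / 4 : ℂ) * Complex.sin (Real.pi * u / (2 * (Kone q : ℂ))) *
    ∏' n : ℕ,
      ((1 - 2 * (q : ℂ) ^ (2 * n + 2) * Complex.cos (Real.pi * u / (Kone q : ℂ)) +
          (q : ℂ) ^ (4 * n + 4)) * (1 - (q : ℂ) ^ (2 * n + 2)))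

/-- The bracket `[u] = H(λu)`. -/
def brak (q : ℝ) (lam : ℂ) (u : ℂ) : ℂ := theta q (lam * u)

def Pfun (q : ℝ) (w : ℂ) : ℂ := ∏' n : ℕ, (1 - (q:ℂ) ^ (2*n+2) * w)


lemma Q_peel {q : ℝ} (hq0 : 0 < q) (hq1 : q < 1) (w : ℂ) :
    ∏' n : ℕ, (1 - (q:ℂ) ^ (2*n) * w) = (1 - w) * Pfun q w := by
  have hm : Multipliable fun n : ℕ => 1 - (q:ℂ) ^ (2*(n+1)) * w := by
    apply (mult_aux hq0 hq1 2 w).congr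
    intro n
    rw [show 2*n+2 = 2*(n+1) from by ring]
  have h := tprod_eq_zero_mul' (f := fun n : ℕ => 1 - (q:ℂ) ^ (2*n) * w) hm
  rw [h]
  have h0 : (1:ℂ) - (q:ℂ)^(2*0)*w = 1 - w := by norm_num
  rw [h0, Pfun]
  congr 1

lemma P_peel {q : ℝ} (hq0 : 0 < q) (hq1 : q < 1) (w : ℂ) :
    Pfun q w = (1 - (q:ℂ)^2 * w) * Pfun q ((q:ℂ)^2 * w) := by
  have hm : Multipliable fun n : ℕ => 1 - (q:ℂ) ^ (2*(n+1)+2) * w := by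
    apply (mult_aux hq0 hq1 4 w).congr
    intro n
    rw [show 2*n+4 = 2*(n+1)+2 from by ring]
  have h := tprod_eq_zero_mul' (f := fun n : ℕ => 1 - (q:ℂ) ^ (2*n+2) * w) hm
  rw [Pfun, h]
  have h0 : (1:ℂ) - (q:ℂ)^(2*0+2)*w = 1 - (q:ℂ)^2*w := by norm_num
  rw [h0, Pfun]
  congr 1
  apply tprod_congr
  intro n
  rw [show 2*(n+1)+2 = (2*n+2)+2 from by ring, pow_add]
  ring

lemma factor_key (E E' a : ℂ) (h : E * E' = 1) :
    (1 - 2*a*((E + E')/2) + a*a) * (1 - a) = (1 - a*E) * ((1 - a*E') * (1 - a*1)) := by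
  linear_combination (-(a*a*(1-a)))*h


lemma factor_key2 (E E' b c : ℂ) (h : E * E' = 1) (hc : c ≠ 0) :
    (1 - 2*(b*c)*((c*E + c⁻¹*E')/2) + (b*b)*(c*c)) * (1 - b*c)
      = (1 - (b*c)*(c*E)) * ((1 - b*E') * (1 - (b*c)*1)) := by
  have h2 : c*c⁻¹ = 1 := mul_inv_cancel₀ hc
  linear_combination (-(b*E'*(1-b*c)))*h2 + (-(b*b*c*c*(1-b*c)))*h

lemma exp_prod_one (y : ℂ) : cexp (y*I) * cexp (-y*I) = 1 := by
  rw [← Complex.exp_add, show y*I + -y*I = 0 from by ring, Complex.exp_zero]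

lemma tprod_theta_eq {q : ℝ} (hq0 : 0 < q) (hq1 : q < 1) (x : ℂ) :
    (∏' n : ℕ, ((1 - 2 * (q : ℂ) ^ (2 * n + 2) * Complex.cos x + (q : ℂ) ^ (4 * n + 4)) *
        (1 - (q : ℂ) ^ (2 * n + 2))))
    = Pfun q (cexp (x*I)) * Pfun q (cexp (-x*I)) * Pfun q 1 := by
  have hEE' : cexp (x*I) * cexp (-x*I) = 1 := exp_prod_one x
  have h1 : (∏' n : ℕ, ((1 - 2 * (q : ℂ) ^ (2 * n + 2) * Complex.cos x + (q : ℂ) ^ (4 * n + 4)) *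
        (1 - (q : ℂ) ^ (2 * n + 2))))
      = ∏' n : ℕ, ((1 - (q:ℂ)^(2*n+2) * cexp (x*I)) *
          ((1 - (q:ℂ)^(2*n+2) * cexp (-x*I)) * (1 - (q:ℂ)^(2*n+2) * 1))) := by
    apply tprod_congr
    intro n
    rw [Complex.cos, show 4*n+4 = (2*n+2)+(2*n+2) from by ring, pow_add]
    linear_combination (-(((q:ℂ)^(2*n+2))*((q:ℂ)^(2*n+2))*(1-(q:ℂ)^(2*n+2))))*hEE'
  rw [h1, Multipliable.tprod_mul (mult_aux hq0 hq1 2 _)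
      ((mult_aux hq0 hq1 2 _).mul (mult_aux hq0 hq1 2 1)),
    Multipliable.tprod_mul (mult_aux hq0 hq1 2 _) (mult_aux hq0 hq1 2 1), ← mul_assoc]
  rfl

lemma tprod_theta_shift {q : ℝ} (hq0 : 0 < q) (hq1 : q < 1) (x : ℂ) :
    (∏' n : ℕ, ((1 - 2 * (q : ℂ) ^ (2 * n + 2) *
          Complex.cos (x - 2*I*(Real.log q : ℂ)) + (q : ℂ) ^ (4 * n + 4)) *
        (1 - (q : ℂ) ^ (2 * n + 2))))
    = Pfun q ((q:ℂ)^2 * cexp (x*I)) *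
        ((1 - cexp (-x*I)) * Pfun q (cexp (-x*I))) * Pfun q 1 := by
  have hq : (q:ℂ) ≠ 0 := by exact_mod_cast hq0.ne'
  have hq2 : ((q:ℂ)^2) ≠ 0 := pow_ne_zero _ hq
  have hEE' : cexp (x*I) * cexp (-x*I) = 1 := exp_prod_one x
  set L : ℂ := (Real.log q : ℂ) with hL
  have hE2 : cexp ((x - 2*I*L)*I) = (q:ℂ)^2 * cexp (x*I) := by
    have harg : (x - 2*I*L)*I = 2*L + x*I := by
      linear_combination (-2*L)*Complex.I_mul_I
    rw [harg, Complex.exp_add]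
    congr 1
    rw [show (2:ℂ)*L = ((2*Real.log q : ℝ):ℂ) from by push_cast; ring, ← Complex.ofReal_exp,
      show Real.exp (2*Real.log q) = q^2 from by
        rw [show (2:ℝ)*Real.log q = Real.log q + Real.log q from by ring, Real.exp_add,
          Real.exp_log hq0]; ring]
    push_cast
    ring
  have hE2' : cexp (-(x - 2*I*L)*I) = ((q:ℂ)^2)⁻¹ * cexp (-x*I) := by
    have hmul : ((q:ℂ)^2 * cexp (x*I)) * cexp (-(x - 2*I*L)*I) = 1 := by
      rw [← hE2, ← Complex.exp_add, show (x-2*I*L)*I + -(x-2*I*L)*I = 0 from by ring,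
        Complex.exp_zero]
    rw [← inv_eq_of_mul_eq_one_right hmul, mul_inv, ← Complex.exp_neg, neg_mul]
  have hcosd : Complex.cos (x - 2*I*L)
      = ((q:ℂ)^2 * cexp (x*I) + ((q:ℂ)^2)⁻¹ * cexp (-x*I))/2 := by
    rw [Complex.cos, hE2, hE2']
  have hm0 : Multipliable fun n : ℕ => 1 - (q:ℂ)^(2*n) * cexp (-x*I) := by
    apply (mult_aux hq0 hq1 0 (cexp (-x*I))).congr
    intro n
    norm_num
  have h1 : (∏' n : ℕ, ((1 - 2 * (q : ℂ) ^ (2 * n + 2) *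
          Complex.cos (x - 2*I*L) + (q : ℂ) ^ (4 * n + 4)) *
        (1 - (q : ℂ) ^ (2 * n + 2))))
      = ∏' n : ℕ, ((1 - (q:ℂ)^(2*n+2) * ((q:ℂ)^2 * cexp (x*I))) *
          ((1 - (q:ℂ)^(2*n) * cexp (-x*I)) * (1 - (q:ℂ)^(2*n+2) * 1))) := by
    apply tprod_congr
    intro n
    rw [hcosd,
      show (q:ℂ)^(2*n+2) = (q:ℂ)^(2*n) * (q:ℂ)^2 from by rw [← pow_add],
      show (q:ℂ)^(4*n+4) = ((q:ℂ)^(2*n)*(q:ℂ)^(2*n))*((q:ℂ)^2*(q:ℂ)^2) from by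
        rw [← pow_add, ← pow_add, ← pow_add]; congr 1; ring]
    exact factor_key2 _ _ _ _ hEE' hq2
  rw [h1, Multipliable.tprod_mul (mult_aux hq0 hq1 2 _) (hm0.mul (mult_aux hq0 hq1 2 1)),
    Multipliable.tprod_mul hm0 (mult_aux hq0 hq1 2 1), Q_peel hq0 hq1, ← mul_assoc]
  rfl


lemma theta_shift1 {q : ℝ} (hq0 : 0 < q) (hq1 : q < 1) (u : ℂ) :
    theta q (u + 2*(Kone q : ℂ)) = - theta q u := by
  have hK : (Kone q : ℂ) ≠ 0 := by
    exact_mod_cast (Kone_pos hq0 hq1).ne'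
  have hsarg : (Real.pi:ℂ) * (u + 2*(Kone q : ℂ)) / (2*(Kone q : ℂ))
      = (Real.pi:ℂ) * u / (2*(Kone q : ℂ)) + (Real.pi:ℂ) := by
    field_simp
  have hcarg : (Real.pi:ℂ) * (u + 2*(Kone q : ℂ)) / ((Kone q : ℂ))
      = (Real.pi:ℂ) * u / ((Kone q : ℂ)) + 2*(Real.pi:ℂ) := by
    field_simp
  rw [theta, theta, hsarg, hcarg, Complex.sin_add_pi]
  have hp : (∏' n : ℕ, ((1 - 2 * (q : ℂ) ^ (2 * n + 2) *
        Complex.cos ((Real.pi:ℂ) * u / ((Kone q : ℂ)) + 2*(Real.pi:ℂ)) + (q : ℂ) ^ (4 * n + 4)) *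
        (1 - (q : ℂ) ^ (2 * n + 2))))
      = (∏' n : ℕ, ((1 - 2 * (q : ℂ) ^ (2 * n + 2) *
        Complex.cos ((Real.pi:ℂ) * u / ((Kone q : ℂ))) + (q : ℂ) ^ (4 * n + 4)) *
        (1 - (q : ℂ) ^ (2 * n + 2)))) := by
    apply tprod_congr
    intro n
    rw [Complex.cos_add_two_pi]
  rw [hp]
  ring

lemma theta_shift2 {q : ℝ} (hq0 : 0 < q) (hq1 : q < 1) (u : ℂ) :
    theta q (u + 2*I*(Ktwo q : ℂ))
      = -(q:ℂ)⁻¹ * cexp (-((Real.pi:ℂ) * u / (Kone q : ℂ)) * I) * theta q u := by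
  have hK : (Kone q : ℂ) ≠ 0 := by
    exact_mod_cast (Kone_pos hq0 hq1).ne'
  have hpi : (Real.pi:ℂ) ≠ 0 := by
    exact_mod_cast Real.pi_ne_zero
  have hq : (q:ℂ) ≠ 0 := by exact_mod_cast hq0.ne'
  have hKtwo : (Ktwo q : ℂ) = -((Kone q:ℂ)/(Real.pi:ℂ)) * (Real.log q : ℂ) := by
    rw [Ktwo]
    push_cast
    ring
  have hexpL : cexp ((Real.log q : ℂ)) = (q:ℂ) := by
    rw [← Complex.ofReal_exp, Real.exp_log hq0]
  set L : ℂ := (Real.log q : ℂ) with hLdef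
  set z : ℂ := (Real.pi:ℂ) * u / (2*(Kone q : ℂ)) with hz
  set x : ℂ := (Real.pi:ℂ) * u / ((Kone q : ℂ)) with hx
  have h2z : (2:ℂ) * z = x := by
    rw [hz, hx, mul_div_assoc']
    exact mul_div_mul_left _ _ two_ne_zero
  have hsarg : (Real.pi:ℂ) * (u + 2*I*(Ktwo q : ℂ)) / (2*(Kone q : ℂ)) = z - I*L := by
    rw [hz, hKtwo]
    field_simp
    ring
  have hcarg : (Real.pi:ℂ) * (u + 2*I*(Ktwo q : ℂ)) / ((Kone q : ℂ)) = x - 2*I*L := by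
    rw [hx, hKtwo]
    field_simp
    ring
  have hqE : cexp ((z - I*L)*I) = (q:ℂ) * cexp (z*I) := by
    have harg : (z - I*L)*I = L + z*I := by
      linear_combination (-L)*Complex.I_mul_I
    rw [harg, Complex.exp_add, hexpL]
  have hqE' : cexp (-(z - I*L)*I) = (q:ℂ)⁻¹ * (cexp (z*I))⁻¹ := by
    rw [neg_mul, Complex.exp_neg, hqE, mul_inv]
  have hxz : cexp (x*I) = cexp (z*I) * cexp (z*I) := by
    rw [← Complex.exp_add]
    congr 1
    linear_combination I * h2z.symm
  have hxz' : cexp (-x*I) = (cexp (z*I))⁻¹ * (cexp (z*I))⁻¹ := by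
    rw [neg_mul, Complex.exp_neg, hxz, mul_inv]
  rw [theta, theta, hsarg, hcarg, tprod_theta_shift hq0 hq1 x, tprod_theta_eq hq0 hq1 x,
    P_peel hq0 hq1 (cexp (x*I)), Complex.sin, Complex.sin, hqE, hqE', hxz, hxz']
  have hs : cexp (z*I) ≠ 0 := Complex.exp_ne_zero _
  simp only [neg_mul, Complex.exp_neg]
  clear_value z x
  rw [← hz]
  field_simp
  ring


lemma brak_shift1 {q : ℝ} (hq0 : 0 < q) (hq1 : q < 1) {lam : ℂ} (hlam : lam ≠ 0) (w : ℂ) :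
    brak q lam (w + 2*(Kone q : ℂ)/lam) = - brak q lam w := by
  rw [brak, brak, show lam * (w + 2*(Kone q : ℂ)/lam) = lam*w + 2*(Kone q : ℂ) from by
    field_simp, theta_shift1 hq0 hq1]

lemma brak_shift1' {q : ℝ} (hq0 : 0 < q) (hq1 : q < 1) {lam : ℂ} (hlam : lam ≠ 0) (w : ℂ) :
    brak q lam (w - 2*(Kone q : ℂ)/lam) = - brak q lam w := by
  have h := brak_shift1 hq0 hq1 hlam (w - 2*(Kone q : ℂ)/lam)
  rw [show w - 2*(Kone q : ℂ)/lam + 2*(Kone q : ℂ)/lam = w from by ring] at h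
  linear_combination h

lemma brak_shift2 {q : ℝ} (hq0 : 0 < q) (hq1 : q < 1) {lam : ℂ} (hlam : lam ≠ 0) (w : ℂ) :
    brak q lam (w + 2*I*(Ktwo q : ℂ)/lam)
      = -(q:ℂ)⁻¹ * cexp (-(I*(Real.pi:ℂ)*lam/(Kone q : ℂ)) * w) * brak q lam w := by
  rw [brak, brak, show lam * (w + 2*I*(Ktwo q : ℂ)/lam) = lam*w + 2*I*(Ktwo q : ℂ) from by
    field_simp, theta_shift2 hq0 hq1]
  congr 2
  ring

lemma brak_shift2' {q : ℝ} (hq0 : 0 < q) (hq1 : q < 1) {lam : ℂ} (hlam : lam ≠ 0) (w : ℂ) :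
    brak q lam (w - 2*I*(Ktwo q : ℂ)/lam)
      = -(q:ℂ)⁻¹ * cexp ((I*(Real.pi:ℂ)*lam/(Kone q : ℂ)) * w) * brak q lam w := by
  have hK : (Kone q : ℂ) ≠ 0 := by exact_mod_cast (Kone_pos hq0 hq1).ne'
  have hpi : (Real.pi:ℂ) ≠ 0 := by exact_mod_cast Real.pi_ne_zero
  have hq : (q:ℂ) ≠ 0 := by exact_mod_cast hq0.ne'
  have hKtwo : (Ktwo q : ℂ) = -((Kone q:ℂ)/(Real.pi:ℂ)) * (Real.log q : ℂ) := by
    rw [Ktwo]; push_cast; ring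
  have hexpL : cexp ((Real.log q : ℂ)) = (q:ℂ) := by
    rw [← Complex.ofReal_exp, Real.exp_log hq0]
  set s : ℂ := 2*I*(Ktwo q : ℂ)/lam with hs
  set mu : ℂ := I*(Real.pi:ℂ)*lam/(Kone q : ℂ) with hmu
  have hmus : mu * s = 2*(Real.log q : ℂ) := by
    rw [hmu, hs, hKtwo]
    field_simp
    linear_combination (-(Real.log q : ℂ)) * Complex.I_mul_I
  have h := brak_shift2 hq0 hq1 hlam (w - s)
  rw [show w - s + s = w from by ring] at h
  have hcomb : cexp (mu * w) * cexp (-mu * (w - s)) = (q:ℂ)^2 := by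
    rw [← Complex.exp_add, show mu*w + (-mu*(w-s)) = mu*s from by ring, hmus,
      show (2:ℂ)*(Real.log q : ℂ) = (Real.log q : ℂ) + (Real.log q : ℂ) from by ring,
      Complex.exp_add, hexpL]
    ring
  have hqq : (q:ℂ) * (q:ℂ)⁻¹ = 1 := mul_inv_cancel₀ hq
  rw [h]
  linear_combination (-((q:ℂ)⁻¹*(q:ℂ)⁻¹*brak q lam (w - s)))*hcomb +
    (-(brak q lam (w - s)*((q:ℂ)*(q:ℂ)⁻¹+1)))*hqq


/-- The closed form of the one-column partition function `W̃_j(u₁,…,u_N|v_M|a₁₂)`,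
with `a₂₁ = -a₁₂`. -/
def oneColClosed (q : ℝ) (lam : ℂ) (M N : ℕ) (u : ℕ → ℂ) (a12 : ℂ) (j : ℕ)
    (vM : ℂ) : ℂ :=
  brak q lam (a12 + (M : ℂ) - 1 + (j : ℂ) - u (N - j) + vM) /
    brak q lam (a12 + (M : ℂ) - 1 + (j : ℂ)) *
  (∏ k ∈ Finset.Icc (N - j + 1) N,
    brak q lam (u k - vM) * brak q lam (-a12 - (M : ℂ) + (k : ℂ) - (N : ℂ)) /
      (brak q lam 1 * brak q lam (-a12 - (M : ℂ) + 1 + (k : ℂ) - (N : ℂ)))) *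
  ∏ k ∈ Finset.Icc 1 (N - j - 1), brak q lam (1 - u k + vM) / brak q lam 1

/-- for each `j = 0,1,…,N-1`, the one-column partition function `W̃_j`,
regarded as a function of `v_M`, satisfies the quasi-periodicities
`W̃_j(v_M + 2K₁/λ) = (-1)^N W̃_j(v_M)` and
`W̃_j(v_M + 2iK₂/λ) = (-q⁻¹)^N exp(-(iπλ/K₁)(N v_M - Σ u_j + a₁₂ + N + M - 2)) W̃_j(v_M)`;
in particular the quasi-periodicity factors are independent of `j`. -/
theorem statement11 (q : ℝ) (hq0 : 0 < q) (hq1 : q < 1) (lam : ℂ) (hlam : lam ≠ 0)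
    (M N : ℕ) (hN : 1 ≤ N) (hNM : N ≤ M)
    (u : ℕ → ℂ) (a12 : ℂ)
    (j : ℕ) (hj : j < N) (vM : ℂ) :
    oneColClosed q lam M N u a12 j (vM + 2 * (Kone q : ℂ) / lam) =
      (-1 : ℂ) ^ N * oneColClosed q lam M N u a12 j vM ∧
    oneColClosed q lam M N u a12 j (vM + 2 * Complex.I * (Ktwo q : ℂ) / lam) =
      (-(q : ℂ)⁻¹) ^ N *
        Complex.exp (-(Complex.I * (Real.pi : ℂ) * lam / (Kone q : ℂ)) *
          ((N : ℂ) * vM - (∑ j ∈ Finset.Icc 1 N, u j) + a12 + (N : ℂ) + (M : ℂ) - 2)) *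
        oneColClosed q lam M N u a12 j vM := by
  constructor
  · -- first quasi-periodicity
    unfold oneColClosed
    have e1 : a12 + (M:ℂ) - 1 + (j:ℂ) - u (N - j) + (vM + 2 * (Kone q:ℂ) / lam)
        = (a12 + (M:ℂ) - 1 + (j:ℂ) - u (N - j) + vM) + 2 * (Kone q:ℂ) / lam := by ring
    have e2 : ∀ k : ℕ, u k - (vM + 2 * (Kone q:ℂ) / lam)
        = (u k - vM) - 2 * (Kone q:ℂ) / lam := fun k => by ring
    have e3 : ∀ k : ℕ, 1 - u k + (vM + 2 * (Kone q:ℂ) / lam)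
        = (1 - u k + vM) + 2 * (Kone q:ℂ) / lam := fun k => by ring
    simp only [e1, e2, e3, brak_shift1 hq0 hq1 hlam, brak_shift1' hq0 hq1 hlam]
    have p2 : (∏ k ∈ Finset.Icc (N-j+1) N,
        -brak q lam (u k - vM) * brak q lam (-a12 - (M:ℂ) + (k:ℂ) - (N:ℂ)) /
          (brak q lam 1 * brak q lam (-a12 - (M:ℂ) + 1 + (k:ℂ) - (N:ℂ))))
        = ∏ k ∈ Finset.Icc (N-j+1) N, (-1 : ℂ) *
        (brak q lam (u k - vM) * brak q lam (-a12 - (M:ℂ) + (k:ℂ) - (N:ℂ)) /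
          (brak q lam 1 * brak q lam (-a12 - (M:ℂ) + 1 + (k:ℂ) - (N:ℂ)))) :=
      Finset.prod_congr rfl fun k _ => by ring
    have p3 : (∏ k ∈ Finset.Icc 1 (N-j-1), -brak q lam (1 - u k + vM) / brak q lam 1)
        = ∏ k ∈ Finset.Icc 1 (N-j-1), (-1 : ℂ) *
            (brak q lam (1 - u k + vM) / brak q lam 1) :=
      Finset.prod_congr rfl fun k _ => by ring
    rw [p2, p3, Finset.prod_mul_distrib, Finset.prod_mul_distrib, Finset.prod_const,
      Finset.prod_const, Nat.card_Icc, Nat.card_Icc,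
      show N+1-(N-j+1) = j from by omega, show N-j-1+1-1 = N-j-1 from by omega,
      show (-1:ℂ)^N = (-1:ℂ)^1*(-1:ℂ)^j*(-1:ℂ)^(N-j-1) from by
        rw [← pow_add, ← pow_add]; congr 1; omega]
    ring
  · -- second quasi-periodicity
    unfold oneColClosed
    have e1 : a12 + (M:ℂ) - 1 + (j:ℂ) - u (N - j) + (vM + 2 * I * (Ktwo q:ℂ) / lam)
        = (a12 + (M:ℂ) - 1 + (j:ℂ) - u (N - j) + vM) + 2 * I * (Ktwo q:ℂ) / lam := by ring
    have e2 : ∀ k : ℕ, u k - (vM + 2 * I * (Ktwo q:ℂ) / lam)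
        = (u k - vM) - 2 * I * (Ktwo q:ℂ) / lam := fun k => by ring
    have e3 : ∀ k : ℕ, 1 - u k + (vM + 2 * I * (Ktwo q:ℂ) / lam)
        = (1 - u k + vM) + 2 * I * (Ktwo q:ℂ) / lam := fun k => by ring
    simp only [e1, e2, e3, brak_shift2 hq0 hq1 hlam, brak_shift2' hq0 hq1 hlam]
    set mu : ℂ := I*(Real.pi:ℂ)*lam/(Kone q:ℂ) with hmu
    have p2 : (∏ k ∈ Finset.Icc (N-j+1) N,
        -(q:ℂ)⁻¹ * cexp (mu * (u k - vM)) * brak q lam (u k - vM) *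
            brak q lam (-a12 - (M:ℂ) + (k:ℂ) - (N:ℂ)) /
          (brak q lam 1 * brak q lam (-a12 - (M:ℂ) + 1 + (k:ℂ) - (N:ℂ))))
        = ∏ k ∈ Finset.Icc (N-j+1) N, ((-(q:ℂ)⁻¹) * cexp (mu * (u k - vM))) *
        (brak q lam (u k - vM) * brak q lam (-a12 - (M:ℂ) + (k:ℂ) - (N:ℂ)) /
          (brak q lam 1 * brak q lam (-a12 - (M:ℂ) + 1 + (k:ℂ) - (N:ℂ)))) :=
      Finset.prod_congr rfl fun k _ => by ring
    have p3 : (∏ k ∈ Finset.Icc 1 (N-j-1),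
          -(q:ℂ)⁻¹ * cexp (-mu * (1 - u k + vM)) * brak q lam (1 - u k + vM) / brak q lam 1)
        = ∏ k ∈ Finset.Icc 1 (N-j-1), ((-(q:ℂ)⁻¹) * cexp (-mu * (1 - u k + vM))) *
            (brak q lam (1 - u k + vM) / brak q lam 1) :=
      Finset.prod_congr rfl fun k _ => by ring
    rw [p2, p3, Finset.prod_mul_distrib, Finset.prod_mul_distrib, Finset.prod_mul_distrib,
      Finset.prod_mul_distrib, Finset.prod_const, Finset.prod_const,
      ← Complex.exp_sum, ← Complex.exp_sum, Nat.card_Icc, Nat.card_Icc,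
      show N+1-(N-j+1) = j from by omega, show N-j-1+1-1 = N-j-1 from by omega]
    -- sums of exponents
    have hS2 : ∑ k ∈ Finset.Icc (N-j+1) N, mu * (u k - vM)
        = mu * ((∑ k ∈ Finset.Icc (N-j+1) N, u k) - (j:ℂ)*vM) := by
      rw [← Finset.mul_sum]
      congr 1
      rw [Finset.sum_sub_distrib, Finset.sum_const, Nat.card_Icc,
        show N+1-(N-j+1) = j from by omega, nsmul_eq_mul]
    have hS3 : ∑ k ∈ Finset.Icc 1 (N-j-1), -mu * (1 - u k + vM)
        = -mu * (((N:ℂ)-(j:ℂ)-1) * (1+vM) - ∑ k ∈ Finset.Icc 1 (N-j-1), u k) := by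
      rw [← Finset.mul_sum]
      congr 1
      have h1 : (∑ k ∈ Finset.Icc 1 (N-j-1), (1 - u k + vM))
          = ∑ k ∈ Finset.Icc 1 (N-j-1), ((1+vM) - u k) :=
        Finset.sum_congr rfl fun k _ => by ring
      rw [h1, Finset.sum_sub_distrib, Finset.sum_const, Nat.card_Icc,
        show N-j-1+1-1 = N-j-1 from by omega, nsmul_eq_mul,
        show ((N-j-1:ℕ):ℂ) = (N:ℂ)-(j:ℂ)-1 from by
          rw [show N-j-1 = N-(j+1) from by omega, Nat.cast_sub (by omega)]
          push_cast
          ring]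
    rw [hS2, hS3]
    -- decomposition of the full sum of u
    have husum : (∑ k ∈ Finset.Icc 1 (N-j-1), u k) + u (N-j)
          + (∑ k ∈ Finset.Icc (N-j+1) N, u k) = ∑ k ∈ Finset.Icc 1 N, u k := by
      have eA : Finset.Icc 1 (N-j-1) = Finset.Ioc 0 (N-j-1) := by
        ext a; simp [Nat.lt_iff_add_one_le]
      have eB : Finset.Icc (N-j+1) N = Finset.Ioc (N-j) N := by
        ext a; simp only [Finset.mem_Icc, Finset.mem_Ioc]; omega
      have eS : u (N-j) = ∑ k ∈ Finset.Ioc (N-j-1) (N-j), u k := by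
        rw [show Finset.Ioc (N-j-1) (N-j) = {N-j} from by ext a; simp; omega,
          Finset.sum_singleton]
      have e0 : Finset.Icc 1 N = Finset.Ioc 0 N := by
        ext a; simp [Nat.lt_iff_add_one_le]
      rw [eA, eB, eS, e0, Finset.sum_Ioc_consecutive u (by omega) (by omega),
        Finset.sum_Ioc_consecutive u (by omega) (by omega)]
    -- combine exponentials
    have hexp : cexp (-mu * (a12 + (M:ℂ) - 1 + (j:ℂ) - u (N - j) + vM)) *
        cexp (mu * ((∑ k ∈ Finset.Icc (N-j+1) N, u k) - (j:ℂ)*vM)) *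
        cexp (-mu * (((N:ℂ)-(j:ℂ)-1) * (1+vM) - ∑ k ∈ Finset.Icc 1 (N-j-1), u k))
        = cexp (-mu * ((N:ℂ) * vM - (∑ k ∈ Finset.Icc 1 N, u k) + a12 + (N:ℂ) + (M:ℂ) - 2)) := by
      rw [← Complex.exp_add, ← Complex.exp_add]
      congr 1
      rw [← husum]
      ring
    rw [show (-(q:ℂ)⁻¹)^N = (-(q:ℂ)⁻¹)^1*(-(q:ℂ)⁻¹)^j*(-(q:ℂ)⁻¹)^(N-j-1) from by
        rw [← pow_add, ← pow_add]; congr 1; omega, ← hexp]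
    ring

end
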